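/- Let H be a separable Hilbert space, Ω a set with σ-algebra Σ, μ a σ-finite measure, and M₀ a countable ℚ+iℚ-linear subspace of H. Suppose q: Ω × M₀ × M₀ → ℂ satisfies: for each fixed y ∈ M₀ and a.e. t, x ↦ q(t; x, y) is ℚ+iℚ-linear and |q(t; x, y)| ≤ g_y(t)‖x‖ for some finite measurable g_y. Then for a.e. t there exist vectors z(t; y) ∈ H with q(t; x, y) = ⟨x, z(t; y)⟩ for all x, y ∈ M₀. -/

import Mathlib

open MeasureTheory
open scoped InnerProductSpace

def ratComplex : Set ℂ := {c : ℂ | ∃ a b : ℚ, c = (a : ℂ) + (b : ℂ) * Complex.I}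

lemma dense_ratComplex : Dense ratComplex := by
  intro c
  rw [Metric.mem_closure_iff]
  intro ε hε
  obtain ⟨a, ha⟩ := exists_rat_near c.re (by positivity : (0:ℝ) < ε/2)
  obtain ⟨b, hb⟩ := exists_rat_near c.im (by positivity : (0:ℝ) < ε/2)
  refine ⟨(a : ℂ) + (b : ℂ) * Complex.I, ⟨a, b, rfl⟩, ?_⟩
  rw [Complex.dist_eq]
  have hre : (c - ((a:ℂ) + (b:ℂ)*Complex.I)).re = c.re - a := by simp
  have him : (c - ((a:ℂ) + (b:ℂ)*Complex.I)).im = c.im - b := by simp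
  calc ‖c - ((a:ℂ) + (b:ℂ)*Complex.I)‖
      ≤ |(c - ((a:ℂ) + (b:ℂ)*Complex.I)).re| + |(c - ((a:ℂ) + (b:ℂ)*Complex.I)).im| :=
        Complex.norm_le_abs_re_add_abs_im _
    _ < ε := by rw [hre, him]; linarith

lemma mem_ratComplex_neg_one : (-1 : ℂ) ∈ ratComplex := ⟨-1, 0, by simp⟩
lemma mem_ratComplex_zero : (0 : ℂ) ∈ ratComplex := ⟨0, 0, by simp⟩

theorem exists_riesz_vector {H : Type*} [NormedAddCommGroup H] [InnerProductSpace ℂ H]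
    [CompleteSpace H] (S : Set H)
    (haddS : ∀ x ∈ S, ∀ x' ∈ S, x + x' ∈ S)
    (hsmulS : ∀ c ∈ ratComplex, ∀ x ∈ S, c • x ∈ S)
    (f : H → ℂ) (C : ℝ)
    (hadd : ∀ x ∈ S, ∀ x' ∈ S, f (x + x') = f x + f x')
    (hsmul : ∀ c ∈ ratComplex, ∀ x ∈ S, f (c • x) = c * f x)
    (hbound : ∀ x ∈ S, ‖f x‖ ≤ C * ‖x‖) :
    ∃ z : H, ∀ x ∈ S, f x = ⟪z, x⟫_ℂ := by
  rcases S.eq_empty_or_nonempty with rfl | ⟨x₀, hx₀⟩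
  · exact ⟨0, fun x hx => absurd hx (Set.notMem_empty x)⟩
  have h0S : (0 : H) ∈ S := by
    have := hsmulS 0 mem_ratComplex_zero x₀ hx₀; simpa using this
  have hsubS : ∀ x ∈ S, ∀ x' ∈ S, x - x' ∈ S := fun x hx x' hx' => by
    have := haddS x hx _ (hsmulS (-1) mem_ratComplex_neg_one x' hx')
    simpa [sub_eq_add_neg] using this
  have hfsub : ∀ x ∈ S, ∀ x' ∈ S, f (x - x') = f x - f x' := fun x hx x' hx' => by
    have h1 := hadd x hx _ (hsmulS (-1) mem_ratComplex_neg_one x' hx')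
    have h2 := hsmul (-1) mem_ratComplex_neg_one x' hx'
    rw [sub_eq_add_neg, ← neg_one_smul ℂ x', h1, h2]; ring
  set C' : ℝ := max C 0 with hC'
  have hC0 : 0 ≤ C' := le_max_right _ _
  -- the closed complex submodule generated (equal to) closure S
  have hsmul_closure : ∀ (c : ℂ), ∀ x ∈ closure S, c • x ∈ closure S := by
    intro c x hx
    have h1 : (c, x) ∈ closure (ratComplex ×ˢ S) := by
      rw [closure_prod_eq]; exact ⟨dense_ratComplex c, hx⟩
    have h2 : c • x ∈ (fun p : ℂ × H => p.1 • p.2) '' closure (ratComplex ×ˢ S) :=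
      ⟨(c, x), h1, rfl⟩
    have h3 := image_closure_subset_closure_image
      (f := fun p : ℂ × H => p.1 • p.2) (s := ratComplex ×ˢ S) (by fun_prop)
    refine closure_mono ?_ (h3 h2)
    rintro _ ⟨⟨c', x'⟩, ⟨hc', hx'⟩, rfl⟩
    exact hsmulS c' hc' x' hx'
  have hadd_closure : ∀ x ∈ closure S, ∀ x' ∈ closure S, x + x' ∈ closure S := by
    intro x hx x' hx'
    have h1 : (x, x') ∈ closure (S ×ˢ S) := by rw [closure_prod_eq]; exact ⟨hx, hx'⟩
    have h2 : x + x' ∈ (fun p : H × H => p.1 + p.2) '' closure (S ×ˢ S) := ⟨(x, x'), h1, rfl⟩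
    have h3 := image_closure_subset_closure_image
      (f := fun p : H × H => p.1 + p.2) (s := S ×ˢ S) (by fun_prop)
    refine closure_mono ?_ (h3 h2)
    rintro _ ⟨⟨a, b⟩, ⟨ha, hb⟩, rfl⟩
    exact haddS a ha b hb
  set K : Submodule ℂ H :=
    { carrier := closure S
      add_mem' := fun {a} {b} ha hb => hadd_closure a ha b hb
      zero_mem' := subset_closure h0S
      smul_mem' := fun c x hx => hsmul_closure c x hx } with hK
  haveI : CompleteSpace K := (isClosed_closure (s := S)).isComplete.completeSpace_coe
  set ι : S → K := fun x => ⟨x.1, subset_closure x.2⟩ with hι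
  have hisom : Isometry ι := fun a b => rfl
  have hdr : DenseRange ι := by
    intro v
    rw [Metric.mem_closure_iff]
    intro ε hε
    have hv : (v : H) ∈ closure S := v.2
    obtain ⟨s, hs, hds⟩ := Metric.mem_closure_iff.1 hv ε hε
    exact ⟨ι ⟨s, hs⟩, Set.mem_range_self _, by simpa [Subtype.dist_eq] using hds⟩
  set fS : S → ℂ := fun x => f x.1 with hfS
  have hlip : LipschitzWith C'.toNNReal fS := by
    apply LipschitzWith.of_dist_le_mul
    intro x y
    rw [dist_eq_norm, Subtype.dist_eq, dist_eq_norm]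
    have h1 : fS x - fS y = f (↑x - ↑y) := (hfsub _ x.2 _ y.2).symm
    rw [h1, Real.coe_toNNReal _ hC0]
    calc ‖f (↑x - ↑y)‖ ≤ C * ‖(x:H) - y‖ := hbound _ (hsubS _ x.2 _ y.2)
      _ ≤ C' * ‖(x:H) - y‖ := by
          have := norm_nonneg ((x:H) - y); nlinarith [le_max_left C 0]
  have hui : IsUniformInducing ι := hisom.isUniformInducing
  have hdi : IsDenseInducing ι := hui.isDenseInducing hdr
  set F : K → ℂ := hdi.extend fS with hF
  have hFuc : UniformContinuous F :=
    uniformContinuous_uniformly_extend hui hdr hlip.uniformContinuous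
  have hFcont : Continuous F := hFuc.continuous
  have hFeq : ∀ x : S, F (ι x) = f x.1 := fun x =>
    hdi.extend_eq hlip.continuous x
  have hFadd : ∀ v w : K, F (v + w) = F v + F w := by
    intro v w
    refine hdr.induction_on₂ (p := fun v w => F (v + w) = F v + F w)
      (isClosed_eq (by fun_prop) (by fun_prop)) (fun a b => ?_) v w
    show F (ι a + ι b) = F (ι a) + F (ι b)
    have he : ι a + ι b = ι ⟨↑a + ↑b, haddS _ a.2 _ b.2⟩ := rfl
    rw [he, hFeq, hFeq, hFeq]
    exact hadd _ a.2 _ b.2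
  have hFsmul_rat : ∀ c ∈ ratComplex, ∀ v : K, F (c • v) = c * F v := by
    intro c hc v
    refine hdr.induction_on (p := fun v => F (c • v) = c * F v) v
      (isClosed_eq (by fun_prop) (by fun_prop)) (fun a => ?_)
    show F (c • ι a) = c * F (ι a)
    have he : c • ι a = ι ⟨c • ↑a, hsmulS c hc _ a.2⟩ := rfl
    rw [he, hFeq, hFeq]
    exact hsmul c hc _ a.2
  have hFsmul : ∀ (c : ℂ) (v : K), F (c • v) = c * F v := by
    intro c v
    have hclosed : IsClosed {c : ℂ | F (c • v) = c * F v} :=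
      isClosed_eq (by fun_prop) (by fun_prop)
    exact hclosed.closure_subset
      (closure_mono (fun c' hc' => hFsmul_rat c' hc' v) (dense_ratComplex c))
  set L : K →L[ℂ] ℂ :=
    { toFun := F
      map_add' := hFadd
      map_smul' := fun c v => by simpa using hFsmul c v
      cont := hFcont } with hL
  set z₀ : K := (InnerProductSpace.toDual ℂ K).symm L with hz
  refine ⟨(z₀ : H), fun x hx => ?_⟩
  have h1 : f x = F (ι ⟨x, hx⟩) := (hFeq ⟨x, hx⟩).symm
  have h2 : F (ι ⟨x, hx⟩) = L (ι ⟨x, hx⟩) := rfl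
  have h3 : L (ι ⟨x, hx⟩) = ⟪z₀, ι ⟨x, hx⟩⟫_ℂ :=
    (InnerProductSpace.toDual_symm_apply).symm
  rw [h1, h2, h3, Submodule.coe_inner]

/-- If `q(t; ·, y)` is a.e. `ℚ+iℚ`-linear on a countable `ℚ+iℚ`-linear subspace `M₀` of a
separable Hilbert space and satisfies `|q(t; x, y)| ≤ g_y(t) ‖x‖` with `g_y` finite
measurable, then for a.e. `t` there are vectors `z(t; y)` with `q(t; x, y) = ⟨x, z(t; y)⟩`
(linear in `x`; in Mathlib's convention, `q t x y = ⟪z, x⟫`) for all `x, y ∈ M₀`. -/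
theorem riesz_representation_ae
    {Ω : Type*} [MeasurableSpace Ω] (μ : Measure Ω)
    {H : Type*} [NormedAddCommGroup H] [InnerProductSpace ℂ H] [CompleteSpace H]
    [TopologicalSpace.SeparableSpace H]
    (M₀ : Set H) (hcount : M₀.Countable)
    (haddM : ∀ x ∈ M₀, ∀ x' ∈ M₀, x + x' ∈ M₀)
    (hsmulM : ∀ c ∈ ratComplex, ∀ x ∈ M₀, c • x ∈ M₀)
    (q : Ω → H → H → ℂ)
    (hq : ∀ y ∈ M₀, ∃ g : Ω → ℝ, Measurable g ∧
      ∀ᵐ t ∂μ,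
        (∀ x ∈ M₀, ∀ x' ∈ M₀, q t (x + x') y = q t x y + q t x' y) ∧
        (∀ c ∈ ratComplex, ∀ x ∈ M₀, q t (c • x) y = c * q t x y) ∧
        (∀ x ∈ M₀, ‖q t x y‖ ≤ g t * ‖x‖)) :
    ∀ᵐ t ∂μ, ∀ y ∈ M₀, ∃ z : H, ∀ x ∈ M₀, q t x y = ⟪z, x⟫_ℂ := by
  rw [ae_ball_iff hcount]
  intro y hy
  obtain ⟨g, hgm, hae⟩ := hq y hy
  filter_upwards [hae] with t ht
  obtain ⟨h1, h2, h3⟩ := ht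
  exact exists_riesz_vector M₀ haddM hsmulM (fun x => q t x y) (g t) h1 h2 h3
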